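/- There exists δ₀ > 0 with the following property. Let 0 < δ ≤ δ₀ and let Φ = (φ_1,…,φ_m) be a δ-admissible system of unit vectors in ℝ^d. Then for every nonzero x ∈ ℝ^d and every y ∈ ℝ^d with ‖x − y‖ ≤ δ‖x‖, the averaged one-step phase-adapting Kaczmarz error satisfies (1/m)Σ_{i=1}^m ‖x − (y + (σ(⟨y,φ_i⟩)·|⟨x,φ_i⟩| − ⟨y,φ_i⟩)·φ_i)‖² ≤ (1 − 1/(4d))·‖x − y‖². -/

import Mathlib

open InnerProductGeometry Finset
open scoped RealInnerProductSpace Classical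

/-- The sign function with the convention `σ(w) = 1` if `w ≥ 0` and `σ(w) = -1` if `w < 0`. -/
noncomputable def sgn (w : ℝ) : ℝ := if 0 ≤ w then 1 else -1

/-- A system `Φ = (φ_1, …, φ_m)` of unit vectors in `ℝ^d` is `δ`-admissible if:
(1) for all nonzero `x, y`, the fraction of indices with `σ(⟨x,φ_i⟩) ≠ σ(⟨y,φ_i⟩)` is at
most `δ + θ_{x,y}/π`; (2) `‖z‖²/(2d) ≤ (1/m)Σ⟨z,φ_i⟩² ≤ 3‖z‖²/(2d)` for all `z`;
(3) `(1/m)Σ ⟨z,φ_i⟩⁴·1{⟨z,φ_i⟩² ≤ ‖z‖²/(δd)} ≤ 4‖z‖⁴/d²` for all `z`;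
(4) `(1/m)Σ ⟨z,φ_i⟩²·1{⟨z,φ_i⟩² > ‖z‖²/(δd)} ≤ 4δ‖z‖²/d` for all `z`. -/
def IsAdmissible (d m : ℕ) (δ : ℝ) (Φ : Fin m → EuclideanSpace ℝ (Fin d)) : Prop :=
  (∀ i, ‖Φ i‖ = 1) ∧
  (∀ x y : EuclideanSpace ℝ (Fin d), x ≠ 0 → y ≠ 0 →
    ((univ.filter fun i => sgn ⟪x, Φ i⟫ ≠ sgn ⟪y, Φ i⟫).card : ℝ) / m
      ≤ δ + angle x y / Real.pi) ∧
  (∀ z : EuclideanSpace ℝ (Fin d),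
    ‖z‖ ^ 2 / (2 * d) ≤ (1 / m : ℝ) * ∑ i, ⟪z, Φ i⟫ ^ 2 ∧
    (1 / m : ℝ) * ∑ i, ⟪z, Φ i⟫ ^ 2 ≤ 3 * ‖z‖ ^ 2 / (2 * d)) ∧
  (∀ z : EuclideanSpace ℝ (Fin d),
    (1 / m : ℝ) * ∑ i, (if ⟪z, Φ i⟫ ^ 2 ≤ ‖z‖ ^ 2 / (δ * d) then ⟪z, Φ i⟫ ^ 4 else 0)
      ≤ 4 * ‖z‖ ^ 4 / d ^ 2) ∧
  (∀ z : EuclideanSpace ℝ (Fin d),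
    (1 / m : ℝ) * ∑ i, (if ‖z‖ ^ 2 / (δ * d) < ⟪z, Φ i⟫ ^ 2 then ⟪z, Φ i⟫ ^ 2 else 0)
      ≤ 4 * δ * ‖z‖ ^ 2 / d)

set_option maxHeartbeats 2000000

lemma sgn_mul_abs (b : ℝ) : sgn b * |b| = b := by
  unfold sgn
  split_ifs with h
  · rw [one_mul, abs_of_nonneg h]
  · rw [neg_one_mul, abs_of_neg (lt_of_not_ge h), neg_neg]

lemma sq_le_of_sgn_ne {a b : ℝ} (h : sgn a ≠ sgn b) : a ^ 2 ≤ (a - b) ^ 2 := by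
  unfold sgn at h
  rcases le_or_gt 0 a with ha | ha <;> rcases le_or_gt 0 b with hb | hb
  · simp [ha, hb] at h
  · nlinarith
  · nlinarith
  · simp [not_le.2 ha, not_le.2 hb] at h

lemma step_eq {E : Type*} [NormedAddCommGroup E] [InnerProductSpace ℝ E]
    (z φ : E) (hφ : ‖φ‖ = 1) (a b : ℝ) (hw : ⟪z, φ⟫ = a - b) :
    ‖z - (sgn b * |a| - b) • φ‖ ^ 2
      = ‖z‖ ^ 2 - (a - b) ^ 2 + (if sgn a ≠ sgn b then 4 * a ^ 2 else 0) := by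
  have h := norm_sub_sq_real z ((sgn b * |a| - b) • φ)
  rw [real_inner_smul_right, hw, norm_smul, hφ, mul_one, Real.norm_eq_abs, sq_abs] at h
  rw [h]
  unfold sgn
  rcases le_or_gt 0 a with ha | ha <;> rcases le_or_gt 0 b with hb | hb
  · rw [if_pos ha, if_pos hb, if_neg (by norm_num), abs_of_nonneg ha]; ring
  · rw [if_pos ha, if_neg (not_le.2 hb), if_pos (by norm_num), abs_of_nonneg ha]; ring
  · rw [if_neg (not_le.2 ha), if_pos hb, if_pos (by norm_num), abs_of_neg ha]; ring
  · rw [if_neg (not_le.2 ha), if_neg (not_le.2 hb), if_neg (by norm_num), abs_of_neg ha]; ring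

/-- There exists `δ₀ > 0` such that for any `0 < δ ≤ δ₀`, any
`δ`-admissible system `Φ` of unit vectors in `ℝ^d`, any nonzero `x` and any `y` with
`‖x − y‖ ≤ δ‖x‖`, the averaged one-step phase-adapting Kaczmarz error satisfies
`(1/m)Σ_i ‖x − (y + (σ(⟨y,φ_i⟩)|⟨x,φ_i⟩| − ⟨y,φ_i⟩)φ_i)‖² ≤ (1 − 1/(4d))‖x − y‖²`. -/
theorem admissible_implies_conditional_contraction :
    ∃ δ₀ : ℝ, 0 < δ₀ ∧
      ∀ (δ : ℝ), 0 < δ → δ ≤ δ₀ →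
      ∀ (d m : ℕ) (Φ : Fin m → EuclideanSpace ℝ (Fin d)), IsAdmissible d m δ Φ →
      ∀ (x : EuclideanSpace ℝ (Fin d)), x ≠ 0 →
      ∀ (y : EuclideanSpace ℝ (Fin d)), ‖x - y‖ ≤ δ * ‖x‖ →
        (1 / m : ℝ) * ∑ i, ‖x - (y + (sgn ⟪y, Φ i⟫ * |⟪x, Φ i⟫| - ⟪y, Φ i⟫) • Φ i)‖ ^ 2
          ≤ (1 - 1 / (4 * d)) * ‖x - y‖ ^ 2 := by
  refine ⟨1/10000, by norm_num, ?_⟩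
  intro δ hδ hδ₀ d m Φ hΦ x hx y hxy
  obtain ⟨hunit, h1, h2, h3, h4⟩ := hΦ
  rcases Nat.eq_zero_or_pos d with hd0 | hd0
  · subst hd0
    exact absurd (Subsingleton.elim x 0) hx
  by_cases hzy : x = y
  · have hc : ∀ i, sgn ⟪y, Φ i⟫ * |⟪x, Φ i⟫| - ⟪y, Φ i⟫ = 0 := by
      intro i; rw [hzy, sgn_mul_abs]; ring
    have hterm : ∀ i, ‖x - (y + (sgn ⟪y, Φ i⟫ * |⟪x, Φ i⟫| - ⟪y, Φ i⟫) • Φ i)‖ ^ 2 = 0 := by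
      intro i
      rw [hc i, zero_smul, add_zero, hzy, sub_self, norm_zero]
      norm_num
    rw [Finset.sum_congr rfl (fun i _ => hterm i), Finset.sum_const_zero, mul_zero, hzy,
      sub_self, norm_zero]
    norm_num
  have hz0 : x - y ≠ 0 := sub_ne_zero.2 hzy
  have hN : 0 < ‖x - y‖ := norm_pos_iff.mpr hz0
  have hxpos : 0 < ‖x‖ := norm_pos_iff.mpr hx
  -- m positive
  have hm : 0 < m := by
    rcases Nat.eq_zero_or_pos m with hm0 | hm0
    · exfalso
      subst hm0
      have h := (h2 (x - y)).1
      simp only [Nat.cast_zero, div_zero, zero_mul, Finset.univ_eq_empty, Finset.sum_empty,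
        mul_zero] at h
      have hpos : 0 < ‖x - y‖ ^ 2 / (2 * (d : ℝ)) :=
        div_pos (pow_pos hN 2) (by positivity)
      linarith
    · exact hm0
  have hmR : ((m : ℝ)) ≠ 0 := Nat.cast_ne_zero.2 hm.ne'
  -- nonzero y
  have hy0 : y ≠ 0 := by
    intro h
    rw [h, sub_zero] at hxy
    nlinarith
  have hypos : 0 < ‖y‖ := norm_pos_iff.mpr hy0
  have hyge : (1 - δ) * ‖x‖ ≤ ‖y‖ := by
    have := norm_sub_norm_le x y
    nlinarith
  -- pointwise identity
  have hkey : ∀ i, ‖x - (y + (sgn ⟪y, Φ i⟫ * |⟪x, Φ i⟫| - ⟪y, Φ i⟫) • Φ i)‖ ^ 2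
      = ‖x - y‖ ^ 2 - ⟪x - y, Φ i⟫ ^ 2
        + (if sgn ⟪x, Φ i⟫ ≠ sgn ⟪y, Φ i⟫ then 4 * ⟪x, Φ i⟫ ^ 2 else 0) := by
    intro i
    have hw : ⟪x - y, Φ i⟫ = ⟪x, Φ i⟫ - ⟪y, Φ i⟫ := inner_sub_left _ _ _
    rw [sub_add_eq_sub_sub, step_eq (x - y) (Φ i) (hunit i) _ _ hw, hw]
  have hsum : (1 / m : ℝ) * ∑ i, ‖x - (y + (sgn ⟪y, Φ i⟫ * |⟪x, Φ i⟫| - ⟪y, Φ i⟫) • Φ i)‖ ^ 2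
      = ‖x - y‖ ^ 2 - (1 / m : ℝ) * ∑ i, ⟪x - y, Φ i⟫ ^ 2
        + (1 / m : ℝ) * ∑ i, (if sgn ⟪x, Φ i⟫ ≠ sgn ⟪y, Φ i⟫ then 4 * ⟪x, Φ i⟫ ^ 2 else 0) := by
    rw [Finset.sum_congr rfl (fun i _ => hkey i), Finset.sum_add_distrib,
      Finset.sum_sub_distrib, Finset.sum_const, card_univ, Fintype.card_fin]
    field_simp
    ring
  -- angle bound
  have hinner : (1 - 2 * δ ^ 2) * (‖x‖ * ‖y‖) ≤ ⟪x, y⟫ := by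
    have hns := norm_sub_sq_real x y
    have hz2 : ‖x - y‖ ^ 2 ≤ δ ^ 2 * ‖x‖ ^ 2 := by nlinarith [norm_nonneg (x - y)]
    have hX2Y : ‖x‖ ≤ 2 * ‖y‖ := by nlinarith
    nlinarith [sq_nonneg (‖x‖ - ‖y‖),
      mul_le_mul_of_nonneg_left hX2Y (by positivity : (0:ℝ) ≤ δ ^ 2 * ‖x‖),
      mul_nonneg (mul_nonneg (sq_nonneg δ) hxpos.le) hypos.le]
  have hcos : 1 - 2 * δ ^ 2 ≤ Real.cos (angle x y) := by
    rw [cos_angle, le_div_iff₀ (mul_pos hxpos hypos)]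
    exact hinner
  have hπδmem : Real.pi * δ ∈ Set.Icc 0 Real.pi := by
    constructor
    · positivity
    · nlinarith [Real.pi_pos]
  have hcosπδ : Real.cos (Real.pi * δ) ≤ 1 - 2 * δ ^ 2 := by
    have h := Real.cos_le_one_sub_mul_cos_sq (x := Real.pi * δ)
      (by rw [abs_of_nonneg (by positivity)]; nlinarith [Real.pi_pos])
    have he : 2 / Real.pi ^ 2 * (Real.pi * δ) ^ 2 = 2 * δ ^ 2 := by
      field_simp
    linarith [he ▸ h]
  have hanglemem : angle x y ∈ Set.Icc 0 Real.pi := ⟨angle_nonneg x y, angle_le_pi x y⟩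
  have hangle : angle x y ≤ Real.pi * δ :=
    (Real.strictAntiOn_cos.le_iff_ge hπδmem hanglemem).1 (hcosπδ.trans hcos)
  have hfracδ : angle x y / Real.pi ≤ δ := by
    rw [div_le_iff₀ Real.pi_pos]
    linarith
  have hCm : ((univ.filter fun i => sgn ⟪x, Φ i⟫ ≠ sgn ⟪y, Φ i⟫).card : ℝ) / m ≤ 2 * δ :=
    le_trans (h1 x y hx hy0) (by linarith)
  -- error term bound
  have hEpt : ∀ i, (if sgn ⟪x, Φ i⟫ ≠ sgn ⟪y, Φ i⟫ then 4 * ⟪x, Φ i⟫ ^ 2 else 0)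
      ≤ 4 * ((if (sgn ⟪x, Φ i⟫ ≠ sgn ⟪y, Φ i⟫ ∧ ⟪x - y, Φ i⟫ ^ 2 ≤ ‖x - y‖ ^ 2 / (δ * d))
              then ⟪x - y, Φ i⟫ ^ 2 else 0)
          + (if ‖x - y‖ ^ 2 / (δ * d) < ⟪x - y, Φ i⟫ ^ 2 then ⟪x - y, Φ i⟫ ^ 2 else 0)) := by
    intro i
    by_cases hmis : sgn ⟪x, Φ i⟫ ≠ sgn ⟪y, Φ i⟫
    · have haw : ⟪x, Φ i⟫ ^ 2 ≤ ⟪x - y, Φ i⟫ ^ 2 := by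
        rw [inner_sub_left]
        exact sq_le_of_sgn_ne hmis
      by_cases hsmall : ⟪x - y, Φ i⟫ ^ 2 ≤ ‖x - y‖ ^ 2 / (δ * d)
      · rw [if_pos hmis, if_pos ⟨hmis, hsmall⟩, if_neg (not_lt.2 hsmall)]
        linarith
      · rw [if_pos hmis, if_neg (fun h => hsmall h.2), if_pos (lt_of_not_ge hsmall)]
        linarith
    · rw [if_neg hmis]
      have t1 : (0:ℝ) ≤ if (sgn ⟪x, Φ i⟫ ≠ sgn ⟪y, Φ i⟫ ∧
          ⟪x - y, Φ i⟫ ^ 2 ≤ ‖x - y‖ ^ 2 / (δ * d)) then ⟪x - y, Φ i⟫ ^ 2 else 0 := by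
        split_ifs
        exacts [sq_nonneg _, le_refl 0]
      have t2 : (0:ℝ) ≤ if ‖x - y‖ ^ 2 / (δ * d) < ⟪x - y, Φ i⟫ ^ 2
          then ⟪x - y, Φ i⟫ ^ 2 else 0 := by
        split_ifs
        exacts [sq_nonneg _, le_refl 0]
      linarith
  have hE : (1 / m : ℝ) * ∑ i, (if sgn ⟪x, Φ i⟫ ≠ sgn ⟪y, Φ i⟫ then 4 * ⟪x, Φ i⟫ ^ 2 else 0)
      ≤ 4 * ((1 / m : ℝ) * ∑ i, (if (sgn ⟪x, Φ i⟫ ≠ sgn ⟪y, Φ i⟫ ∧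
              ⟪x - y, Φ i⟫ ^ 2 ≤ ‖x - y‖ ^ 2 / (δ * d)) then ⟪x - y, Φ i⟫ ^ 2 else 0))
        + 4 * ((1 / m : ℝ) * ∑ i,
            (if ‖x - y‖ ^ 2 / (δ * d) < ⟪x - y, Φ i⟫ ^ 2 then ⟪x - y, Φ i⟫ ^ 2 else 0)) := by
    have hs := Finset.sum_le_sum (s := univ) (fun i _ => hEpt i)
    have h0 : (0:ℝ) ≤ 1 / m := by positivity
    calc (1 / m : ℝ) * ∑ i, (if sgn ⟪x, Φ i⟫ ≠ sgn ⟪y, Φ i⟫ then 4 * ⟪x, Φ i⟫ ^ 2 else 0)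
        ≤ (1 / m : ℝ) * ∑ i, (4 * ((if (sgn ⟪x, Φ i⟫ ≠ sgn ⟪y, Φ i⟫ ∧
              ⟪x - y, Φ i⟫ ^ 2 ≤ ‖x - y‖ ^ 2 / (δ * d)) then ⟪x - y, Φ i⟫ ^ 2 else 0)
          + (if ‖x - y‖ ^ 2 / (δ * d) < ⟪x - y, Φ i⟫ ^ 2 then ⟪x - y, Φ i⟫ ^ 2 else 0))) :=
          mul_le_mul_of_nonneg_left hs h0
      _ = _ := by
          rw [← Finset.mul_sum, Finset.sum_add_distrib]
          ring
  -- Cauchy-Schwarz for the small-mismatch term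
  have hB1 : (1 / m : ℝ) * ∑ i, (if (sgn ⟪x, Φ i⟫ ≠ sgn ⟪y, Φ i⟫ ∧
        ⟪x - y, Φ i⟫ ^ 2 ≤ ‖x - y‖ ^ 2 / (δ * d)) then ⟪x - y, Φ i⟫ ^ 2 else 0)
      ≤ Real.sqrt (8 * δ) * ‖x - y‖ ^ 2 / d := by
    have hCS := sum_mul_sq_le_sq_mul_sq univ
      (fun i => if sgn ⟪x, Φ i⟫ ≠ sgn ⟪y, Φ i⟫ then (1:ℝ) else 0)
      (fun i => if ⟪x - y, Φ i⟫ ^ 2 ≤ ‖x - y‖ ^ 2 / (δ * d) then ⟪x - y, Φ i⟫ ^ 2 else 0)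
    have e1 : ∑ i, (if sgn ⟪x, Φ i⟫ ≠ sgn ⟪y, Φ i⟫ then (1:ℝ) else 0)
          * (if ⟪x - y, Φ i⟫ ^ 2 ≤ ‖x - y‖ ^ 2 / (δ * d) then ⟪x - y, Φ i⟫ ^ 2 else 0)
        = ∑ i, (if (sgn ⟪x, Φ i⟫ ≠ sgn ⟪y, Φ i⟫ ∧
            ⟪x - y, Φ i⟫ ^ 2 ≤ ‖x - y‖ ^ 2 / (δ * d)) then ⟪x - y, Φ i⟫ ^ 2 else 0) := by
      refine Finset.sum_congr rfl fun i _ => ?_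
      by_cases hp : sgn ⟪x, Φ i⟫ ≠ sgn ⟪y, Φ i⟫
      · by_cases hq : ⟪x - y, Φ i⟫ ^ 2 ≤ ‖x - y‖ ^ 2 / (δ * d)
        · rw [if_pos hp, if_pos hq, if_pos ⟨hp, hq⟩, one_mul]
        · have hpq : ¬(sgn ⟪x, Φ i⟫ ≠ sgn ⟪y, Φ i⟫ ∧
              ⟪x - y, Φ i⟫ ^ 2 ≤ ‖x - y‖ ^ 2 / (δ * d)) := fun h => hq h.2
          rw [if_pos hp, if_neg hq, if_neg hpq, mul_zero]
      · have hpq : ¬(sgn ⟪x, Φ i⟫ ≠ sgn ⟪y, Φ i⟫ ∧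
            ⟪x - y, Φ i⟫ ^ 2 ≤ ‖x - y‖ ^ 2 / (δ * d)) := fun h => hp h.1
        rw [if_neg hp, if_neg hpq, zero_mul]
    have e2 : ∑ i, (if sgn ⟪x, Φ i⟫ ≠ sgn ⟪y, Φ i⟫ then (1:ℝ) else 0) ^ 2
        = ((univ.filter fun i => sgn ⟪x, Φ i⟫ ≠ sgn ⟪y, Φ i⟫).card : ℝ) := by
      have hsq : ∀ i : Fin m, (if sgn ⟪x, Φ i⟫ ≠ sgn ⟪y, Φ i⟫ then (1:ℝ) else 0) ^ 2
          = (if sgn ⟪x, Φ i⟫ ≠ sgn ⟪y, Φ i⟫ then (1:ℝ) else 0) := fun i => by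
        split_ifs <;> norm_num
      rw [Finset.sum_congr rfl fun i _ => hsq i, Finset.sum_boole]
    have e3 : ∑ i, (if ⟪x - y, Φ i⟫ ^ 2 ≤ ‖x - y‖ ^ 2 / (δ * d)
            then ⟪x - y, Φ i⟫ ^ 2 else 0) ^ 2
        = ∑ i, (if ⟪x - y, Φ i⟫ ^ 2 ≤ ‖x - y‖ ^ 2 / (δ * d) then ⟪x - y, Φ i⟫ ^ 4 else 0) := by
      refine Finset.sum_congr rfl fun i _ => ?_
      split_ifs <;> ring
    rw [e1, e2, e3] at hCS
    have hGnn : (0:ℝ) ≤ (1 / m : ℝ) * ∑ i, (if ⟪x - y, Φ i⟫ ^ 2 ≤ ‖x - y‖ ^ 2 / (δ * d)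
        then ⟪x - y, Φ i⟫ ^ 4 else 0) := by
      apply mul_nonneg (by positivity)
      apply Finset.sum_nonneg
      intro i _
      split_ifs
      exacts [by positivity, le_refl 0]
    have hB1nn : (0:ℝ) ≤ (1 / m : ℝ) * ∑ i, (if (sgn ⟪x, Φ i⟫ ≠ sgn ⟪y, Φ i⟫ ∧
        ⟪x - y, Φ i⟫ ^ 2 ≤ ‖x - y‖ ^ 2 / (δ * d)) then ⟪x - y, Φ i⟫ ^ 2 else 0) := by
      apply mul_nonneg (by positivity)
      apply Finset.sum_nonneg
      intro i _
      split_ifs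
      exacts [sq_nonneg _, le_refl 0]
    have hB1sq : ((1 / m : ℝ) * ∑ i, (if (sgn ⟪x, Φ i⟫ ≠ sgn ⟪y, Φ i⟫ ∧
          ⟪x - y, Φ i⟫ ^ 2 ≤ ‖x - y‖ ^ 2 / (δ * d)) then ⟪x - y, Φ i⟫ ^ 2 else 0)) ^ 2
        ≤ 2 * δ * (4 * ‖x - y‖ ^ 4 / d ^ 2) := by
      have step1 : ((1 / m : ℝ) * ∑ i, (if (sgn ⟪x, Φ i⟫ ≠ sgn ⟪y, Φ i⟫ ∧
            ⟪x - y, Φ i⟫ ^ 2 ≤ ‖x - y‖ ^ 2 / (δ * d)) then ⟪x - y, Φ i⟫ ^ 2 else 0)) ^ 2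
          ≤ (((univ.filter fun i => sgn ⟪x, Φ i⟫ ≠ sgn ⟪y, Φ i⟫).card : ℝ) / m)
            * ((1 / m : ℝ) * ∑ i, (if ⟪x - y, Φ i⟫ ^ 2 ≤ ‖x - y‖ ^ 2 / (δ * d)
                then ⟪x - y, Φ i⟫ ^ 4 else 0)) := by
        calc ((1 / m : ℝ) * ∑ i, (if (sgn ⟪x, Φ i⟫ ≠ sgn ⟪y, Φ i⟫ ∧
              ⟪x - y, Φ i⟫ ^ 2 ≤ ‖x - y‖ ^ 2 / (δ * d)) then ⟪x - y, Φ i⟫ ^ 2 else 0)) ^ 2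
            = (1 / m : ℝ) ^ 2 * (∑ i, (if (sgn ⟪x, Φ i⟫ ≠ sgn ⟪y, Φ i⟫ ∧
              ⟪x - y, Φ i⟫ ^ 2 ≤ ‖x - y‖ ^ 2 / (δ * d)) then ⟪x - y, Φ i⟫ ^ 2 else 0)) ^ 2 := by
              ring
          _ ≤ (1 / m : ℝ) ^ 2 * (((univ.filter fun i => sgn ⟪x, Φ i⟫ ≠ sgn ⟪y, Φ i⟫).card : ℝ)
              * ∑ i, (if ⟪x - y, Φ i⟫ ^ 2 ≤ ‖x - y‖ ^ 2 / (δ * d)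
                  then ⟪x - y, Φ i⟫ ^ 4 else 0)) :=
              mul_le_mul_of_nonneg_left hCS (by positivity)
          _ = _ := by ring
      refine step1.trans ?_
      exact mul_le_mul hCm (h3 (x - y)) hGnn (by linarith)
    have hR2 : (Real.sqrt (8 * δ) * ‖x - y‖ ^ 2 / d) ^ 2
        = 2 * δ * (4 * ‖x - y‖ ^ 4 / (d : ℝ) ^ 2) := by
      rw [div_pow, mul_pow, Real.sq_sqrt (by linarith : (0:ℝ) ≤ 8 * δ)]
      ring
    have hRnn : (0:ℝ) ≤ Real.sqrt (8 * δ) * ‖x - y‖ ^ 2 / d := by positivity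
    nlinarith [hB1sq, hR2, hRnn, hB1nn]
  have hB2 := h4 (x - y)
  have hA := (h2 (x - y)).1
  -- final assembly
  rw [hsum]
  have hD : (1:ℝ) ≤ (d : ℝ) := by exact_mod_cast hd0
  have hDpos : (0:ℝ) < (d : ℝ) := by linarith
  have hND : (0:ℝ) ≤ ‖x - y‖ ^ 2 / (d : ℝ) := by positivity
  have hsδ : Real.sqrt (8 * δ) ≤ 3 / 100 := by
    calc Real.sqrt (8 * δ) ≤ Real.sqrt ((3/100) ^ 2) := Real.sqrt_le_sqrt (by nlinarith)
      _ = 3 / 100 := Real.sqrt_sq (by norm_num)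
  have hsprod := mul_le_mul_of_nonneg_right hsδ hND
  have hδprod := mul_le_mul_of_nonneg_right (le_trans hδ₀ (le_refl (1/10000 : ℝ))) hND
  have key1 : Real.sqrt (8 * δ) * ‖x - y‖ ^ 2 / d
      = Real.sqrt (8 * δ) * (‖x - y‖ ^ 2 / d) := by ring
  have key2 : 4 * δ * ‖x - y‖ ^ 2 / d = δ * (‖x - y‖ ^ 2 / d) * 4 := by ring
  have key3 : ‖x - y‖ ^ 2 / (2 * (d:ℝ)) = (1/2) * (‖x - y‖ ^ 2 / d) := by ring
  have key4 : (1 - 1 / (4 * (d:ℝ))) * ‖x - y‖ ^ 2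
      = ‖x - y‖ ^ 2 - (1/4) * (‖x - y‖ ^ 2 / d) := by ring
  rw [key4]
  rw [key1] at hB1
  rw [key2] at hB2
  rw [key3] at hA
  linarith [hE, hB1, hB2, hA, hsprod, hδprod]
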